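/- Let π be the linear template with N parameters given by π(a) = ∑_{i=1}^N a_i·x_i, and suppose m ≥ 0 satisfies V_{m+1} = V_m and J_{m+1} = J_m. Then V_m = {v ∈ ℝ^N : ⟨v, x(t)⟩ = 0 for all t ∈ D}, and consequently the orthogonal complement of V_m in ℝ^N equals the linear span of the trajectory: V_m^⊥ = span{x(t) : t ∈ D}. -/

import Mathlib

open MvPolynomial

/-- The Lie derivative of a polynomial along the polynomial vector field `F`. -/
noncomputable def lieDeriv {N : ℕ} (F : Fin N → MvPolynomial (Fin N) ℝ)
    (p : MvPolynomial (Fin N) ℝ) : MvPolynomial (Fin N) ℝ :=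
  ∑ i, pderiv i p * F i

/-- The vector space `V_i` of parameters `v` such that all Lie derivatives of `π[v]`
up to order `i` vanish at `v₀`. -/
def Vset {N n : ℕ} (F : Fin N → MvPolynomial (Fin N) ℝ) (v₀ : Fin N → ℝ)
    (π : (Fin n → ℝ) →ₗ[ℝ] MvPolynomial (Fin N) ℝ) (i : ℕ) : Set (Fin n → ℝ) :=
  {v | ∀ j ≤ i, eval v₀ ((lieDeriv F)^[j] (π v)) = 0}

/-- The ideal `J_i` generated by `⋃_{j=0}^{i} 𝓛⁽ʲ⁾(π[V_i])`. -/
noncomputable def Jideal {N n : ℕ} (F : Fin N → MvPolynomial (Fin N) ℝ)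
    (v₀ : Fin N → ℝ) (π : (Fin n → ℝ) →ₗ[ℝ] MvPolynomial (Fin N) ℝ) (i : ℕ) :
    Ideal (MvPolynomial (Fin N) ℝ) :=
  Ideal.span {q | ∃ j ≤ i, ∃ v ∈ Vset F v₀ π i, q = (lieDeriv F)^[j] (π v)}

lemma lieDeriv_add {N : ℕ} (F : Fin N → MvPolynomial (Fin N) ℝ) (p q) :
    lieDeriv F (p + q) = lieDeriv F p + lieDeriv F q := by
  simp [lieDeriv, add_mul, Finset.sum_add_distrib]

lemma lieDeriv_mul {N : ℕ} (F : Fin N → MvPolynomial (Fin N) ℝ) (p q) :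
    lieDeriv F (p * q) = lieDeriv F p * q + p * lieDeriv F q := by
  rw [lieDeriv, lieDeriv, lieDeriv, Finset.sum_mul, Finset.mul_sum, ← Finset.sum_add_distrib]
  refine Finset.sum_congr rfl fun i _ => ?_
  rw [pderiv_mul]; ring

lemma lieDeriv_X_mul {N : ℕ} (F : Fin N → MvPolynomial (Fin N) ℝ) (p) (i : Fin N) :
    lieDeriv F (p * X i) = lieDeriv F p * X i + p * F i := by
  rw [lieDeriv_mul]
  congr 1
  simp [lieDeriv, pderiv_X, Pi.single_apply, Finset.mul_sum]

lemma hasDerivAt_eval_comp {N : ℕ} {F : Fin N → MvPolynomial (Fin N) ℝ} {D : Set ℝ}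
    {x : ℝ → Fin N → ℝ}
    (hsol : ∀ t ∈ D, HasDerivAt x (fun i => eval (x t) (F i)) t)
    (p : MvPolynomial (Fin N) ℝ) {t : ℝ} (ht : t ∈ D) :
    HasDerivAt (fun s => eval (x s) p) (eval (x t) (lieDeriv F p)) t := by
  induction p using MvPolynomial.induction_on with
  | C a => simpa [lieDeriv] using hasDerivAt_const t a
  | add p q hp hq => simpa [lieDeriv_add, Pi.add_def] using hp.add hq
  | mul_X p i hp =>
      have hxi : HasDerivAt (fun s => x s i) (eval (x t) (F i)) t :=
        hasDerivAt_pi.mp (hsol t ht) i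
      simpa [lieDeriv_X_mul, mul_comm, Pi.mul_def] using hp.mul hxi

lemma analytic_eval_comp {N : ℕ} {D : Set ℝ} {x : ℝ → Fin N → ℝ}
    (han : ∀ i, AnalyticOnNhd ℝ (fun t => x t i) D) (p : MvPolynomial (Fin N) ℝ) :
    AnalyticOnNhd ℝ (fun t => eval (x t) p) D := by
  induction p using MvPolynomial.induction_on with
  | C a => simpa using analyticOnNhd_const
  | add p q hp hq => simpa [Pi.add_def] using hp.add hq
  | mul_X p i hp => simpa using hp.mul (han i)

lemma eqOn_zero_of_chain {D : Set ℝ} (hD : IsOpen D) (hDc : D.OrdConnected)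
    (h0 : (0:ℝ) ∈ D) {f : ℝ → ℝ} (hf : AnalyticOnNhd ℝ f D) (g : ℕ → ℝ → ℝ)
    (hg0 : g 0 = f)
    (hder : ∀ n, ∀ t ∈ D, HasDerivAt (g n) (g (n+1) t) t)
    (hz : ∀ n, g n 0 = 0) : ∀ t ∈ D, f t = 0 := by
  have hiter : ∀ n, ∀ t ∈ D, iteratedDeriv n f t = g n t := by
    intro n
    induction n with
    | zero => intro t ht; simp [iteratedDeriv_zero, hg0]
    | succ n ih =>
        intro t ht
        rw [iteratedDeriv_succ]
        have heq : iteratedDeriv n f =ᶠ[nhds t] g n :=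
          Filter.eventuallyEq_of_mem (hD.mem_nhds ht) ih
        rw [heq.deriv_eq]
        exact (hder n t ht).deriv
  obtain ⟨p, r, hp⟩ := hf 0 h0
  have hev : f =ᶠ[nhds (0:ℝ)] 0 := by
    refine Filter.eventuallyEq_of_mem (EMetric.ball_mem_nhds (0:ℝ) hp.r_pos) fun y hy => ?_
    have hy' : y - 0 ∈ Metric.eball (0:ℝ) r := by simpa using hy
    have hs := hp.hasSum_iteratedFDeriv hy'
    have hterm : ∀ n, (n.factorial : ℝ)⁻¹ •
        (iteratedFDeriv ℝ n f 0 : (Fin n → ℝ) → ℝ) (fun _ => y - 0) = 0 := by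
      intro n
      rw [iteratedFDeriv_apply_eq_iteratedDeriv_mul_prod, hiter n 0 h0, hz]
      simp
    simp only [hterm] at hs
    simpa using hs.unique hasSum_zero
  exact fun t ht =>
    (hf.eqOn_zero_of_preconnected_of_eventuallyEq_zero hDc.isPreconnected h0 hev) ht

section
variable {N n : ℕ} (F : Fin N → MvPolynomial (Fin N) ℝ) (v₀ : Fin N → ℝ)
    (π : (Fin n → ℝ) →ₗ[ℝ] MvPolynomial (Fin N) ℝ) (m : ℕ)
    (hV : Vset F v₀ π (m + 1) = Vset F v₀ π m)
    (hJ : Jideal F v₀ π (m + 1) = Jideal F v₀ π m)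

include hV hJ in
lemma lieDeriv_mem_Jideal {p : MvPolynomial (Fin N) ℝ} (hp : p ∈ Jideal F v₀ π m) :
    lieDeriv F p ∈ Jideal F v₀ π m := by
  induction hp using Submodule.span_induction with
  | mem q hq =>
      obtain ⟨j, hj, v, hv, rfl⟩ := hq
      have h1 : lieDeriv F ((lieDeriv F)^[j] (π v)) = (lieDeriv F)^[j + 1] (π v) :=
        (Function.iterate_succ_apply' (lieDeriv F) j (π v)).symm
      rw [h1, ← hJ]
      exact Ideal.subset_span ⟨j + 1, by omega, v, by rw [hV]; exact hv, rfl⟩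
  | zero => simp [lieDeriv]
  | add a b _ _ ha hb => rw [lieDeriv_add]; exact Ideal.add_mem _ ha hb
  | smul c a haJ ha =>
      rw [smul_eq_mul, lieDeriv_mul]
      exact Ideal.add_mem _ (Ideal.mul_mem_left _ _ haJ) (Ideal.mul_mem_left _ _ ha)

include hV hJ in
lemma iterate_mem_Jideal {v : Fin n → ℝ} (hv : v ∈ Vset F v₀ π m) (j : ℕ) :
    (lieDeriv F)^[j] (π v) ∈ Jideal F v₀ π m := by
  induction j with
  | zero => exact Ideal.subset_span ⟨0, Nat.zero_le _, v, hv, rfl⟩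
  | succ j ih =>
      rw [Function.iterate_succ_apply']
      exact lieDeriv_mem_Jideal F v₀ π m hV hJ ih

lemma eval_v0_eq_zero_of_mem {p : MvPolynomial (Fin N) ℝ} (hp : p ∈ Jideal F v₀ π m) :
    eval v₀ p = 0 := by
  have hle : Jideal F v₀ π m ≤ RingHom.ker (eval v₀) := by
    rw [Jideal, Ideal.span_le]
    rintro _ ⟨j, hj, v, hv, rfl⟩
    exact hv j hj
  exact hle hp

end

/-- for the linear template `π(a) = ∑ᵢ aᵢ xᵢ`, if the double chain
stabilizes at `m`, then `V_m` is exactly the set of vectors orthogonal to the whole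
trajectory, and its orthogonal complement equals the linear span of the trajectory. -/
theorem stmt13
    (N : ℕ) (hN : 1 ≤ N)
    (F : Fin N → MvPolynomial (Fin N) ℝ) (v₀ : Fin N → ℝ)
    (D : Set ℝ) (hD : IsOpen D) (hDc : D.OrdConnected) (h0 : (0 : ℝ) ∈ D)
    (x : ℝ → Fin N → ℝ)
    (hsol : ∀ t ∈ D, HasDerivAt x (fun i => eval (x t) (F i)) t)
    (hx0 : x 0 = v₀)
    (han : ∀ i, AnalyticOnNhd ℝ (fun t => x t i) D)
    (π : (Fin N → ℝ) →ₗ[ℝ] MvPolynomial (Fin N) ℝ)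
    (hπ : ∀ a : Fin N → ℝ, π a = ∑ i, a i • (X i : MvPolynomial (Fin N) ℝ))
    (m : ℕ)
    (hV : Vset F v₀ π (m + 1) = Vset F v₀ π m)
    (hJ : Jideal F v₀ π (m + 1) = Jideal F v₀ π m) :
    Vset F v₀ π m = {v : Fin N → ℝ | ∀ t ∈ D, ∑ i, v i * x t i = 0} ∧
    {w : Fin N → ℝ | ∀ v ∈ Vset F v₀ π m, ∑ i, v i * w i = 0}
      = (Submodule.span ℝ (x '' D) : Set (Fin N → ℝ)) := by
  classical
  have heval : ∀ (v : Fin N → ℝ) (w : Fin N → ℝ), eval w (π v) = ∑ i, v i * w i := by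
    intro v w
    simp [hπ, smul_eq_C_mul]
  -- derivative chain
  have hder : ∀ (p : MvPolynomial (Fin N) ℝ), ∀ j, ∀ t ∈ D,
      HasDerivAt (fun s => eval (x s) ((lieDeriv F)^[j] p))
        (eval (x t) ((lieDeriv F)^[j+1] p)) t := by
    intro p j t ht
    rw [Function.iterate_succ_apply']
    exact hasDerivAt_eval_comp hsol _ ht
  -- forward direction: members of V_m vanish along the trajectory
  have hforward : ∀ v ∈ Vset F v₀ π m, ∀ t ∈ D, eval (x t) (π v) = 0 := by
    intro v hv
    refine eqOn_zero_of_chain hD hDc h0 (analytic_eval_comp han (π v))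
      (fun j s => eval (x s) ((lieDeriv F)^[j] (π v))) (by simp) (hder (π v)) ?_
    intro n
    show eval (x 0) ((lieDeriv F)^[n] (π v)) = 0
    rw [hx0]
    exact eval_v0_eq_zero_of_mem F v₀ π m (iterate_mem_Jideal F v₀ π m hV hJ hv n)
  -- backward direction
  have hbackward : ∀ v : Fin N → ℝ, (∀ t ∈ D, eval (x t) (π v) = 0) → v ∈ Vset F v₀ π m := by
    intro v hv
    have hall : ∀ j, ∀ t ∈ D, eval (x t) ((lieDeriv F)^[j] (π v)) = 0 := by
      intro j
      induction j with
      | zero => simpa using hv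
      | succ j ih =>
          intro t ht
          have heq : (fun s => eval (x s) ((lieDeriv F)^[j] (π v))) =ᶠ[nhds t]
              (fun _ => (0:ℝ)) := Filter.eventuallyEq_of_mem (hD.mem_nhds ht) ih
          have h1 : HasDerivAt (fun s => eval (x s) ((lieDeriv F)^[j] (π v))) 0 t :=
            (hasDerivAt_const t (0:ℝ)).congr_of_eventuallyEq heq
          exact ((hder (π v) j t ht).unique h1)
    intro j _
    rw [← hx0]
    exact hall j 0 h0
  have hfirst : Vset F v₀ π m = {v : Fin N → ℝ | ∀ t ∈ D, ∑ i, v i * x t i = 0} := by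
    ext v
    simp only [Set.mem_setOf_eq]
    constructor
    · intro hv t ht
      rw [← heval v (x t)]
      exact hforward v hv t ht
    · intro hv
      refine hbackward v fun t ht => ?_
      rw [heval v (x t)]
      exact hv t ht
  refine ⟨hfirst, ?_⟩
  -- orthogonality part
  set S := Vset F v₀ π m with hSdef
  let toE : (Fin N → ℝ) → EuclideanSpace ℝ (Fin N) := fun w => WithLp.toLp 2 w
  let e : EuclideanSpace ℝ (Fin N) ≃ₗ[ℝ] (Fin N → ℝ) := WithLp.linearEquiv 2 ℝ (Fin N → ℝ)
  let K : Submodule ℝ (EuclideanSpace ℝ (Fin N)) := Submodule.span ℝ ((toE ∘ x) '' D)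
  let P : Submodule ℝ (Fin N → ℝ) := Submodule.span ℝ (x '' D)
  have hinner : ∀ a b : EuclideanSpace ℝ (Fin N), inner ℝ a b = ∑ i, a i * b i := by
    intro a b
    simp [PiLp.inner_apply, RCLike.inner_apply, mul_comm]
  have hKP : ∀ w : Fin N → ℝ, toE w ∈ K ↔ w ∈ P := by
    intro w
    constructor
    · intro hw
      have hle : K ≤ Submodule.comap e.toLinearMap P := by
        rw [Submodule.span_le]
        rintro _ ⟨t, ht, rfl⟩
        exact Submodule.subset_span ⟨t, ht, rfl⟩
      exact hle hw
    · intro hw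
      have hle : P ≤ Submodule.comap e.symm.toLinearMap K := by
        rw [Submodule.span_le]
        rintro _ ⟨t, ht, rfl⟩
        exact Submodule.subset_span ⟨t, ht, rfl⟩
      exact hle hw
  have hSK : ∀ v : Fin N → ℝ, v ∈ S ↔ toE v ∈ Kᗮ := by
    intro v
    rw [hfirst]
    constructor
    · intro hv
      refine (Submodule.mem_orthogonal _ _).mpr ?_
      intro u hu
      induction hu using Submodule.span_induction with
      | mem u hu =>
          obtain ⟨t, ht, rfl⟩ := hu
          rw [real_inner_comm, hinner]
          exact hv t ht
      | zero => simp
      | add a b _ _ ha hb => rw [inner_add_left, ha, hb]; ring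
      | smul c a _ ha => rw [inner_smul_left, ha]; simp
    · intro hv t ht
      have := (Submodule.mem_orthogonal _ _).mp hv (toE (x t))
        (Submodule.subset_span ⟨t, ht, rfl⟩)
      rw [real_inner_comm, hinner] at this
      exact this
  ext w
  simp only [Set.mem_setOf_eq, SetLike.mem_coe]
  rw [show ((w ∈ (Submodule.span ℝ (x '' D) : Submodule ℝ (Fin N → ℝ))) ↔ toE w ∈ K) from
      (hKP w).symm,
    ← Submodule.orthogonal_orthogonal K, Submodule.mem_orthogonal]
  constructor
  · intro h u hu
    rw [hinner]
    exact h u ((hSK u).mpr hu)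
  · intro h v hv
    rw [← hinner]
    exact h (toE v) ((hSK v).mp hv)
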